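/- arXiv:1810.09604 — 9 statements merged into one kernel-verified Lean document; each statement's English description precedes it below -/
import Mathlib

section
/- (Corollary 5.8: dividing implies shearing, for the linear-order context.) Let M be a structure in a first-order language L, A a set of elements of M, and φ(x̄; ā) a formula with parameter tuple ā from M which divides over A. Then for every finite set I₀ ⊆ ℚ and every t ∈ ℚ ∖ I₀, setting I₁ = I₀ ∪ {t}, the formula φ(x̄; ā) (I₀, I₁)-shears over A for the context of the linear order ℚ. -/
/- Corollary 5.8 of "Shearing in some simple theories":
dividing implies shearing, for the linear-order context (ℚ, <). -/

open FirstOrder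

universe u v w

/-- A family `b` of `ℓ`-tuples from `N`, indexed by `ℚ`, is order-indiscernible over the
set `A ⊆ N`: increasing index tuples of the same length give tuples satisfying the same
formulas with parameters from `A`. -/
def OrderIndiscernibleOver (L : FirstOrder.Language.{u, v}) (N : Type w) [L.Structure N]
    (A : Set N) (ℓ : ℕ) (b : ℚ → Fin ℓ → N) : Prop :=
  ∀ (m k : ℕ) (ψ : L.Formula ((Fin m × Fin ℓ) ⊕ Fin k)) (e : Fin k → N),
    (∀ i, e i ∈ A) →
    ∀ q q' : Fin m → ℚ, StrictMono q → StrictMono q' →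
      (ψ.Realize (Sum.elim (fun p => b (q p.1) p.2) e) ↔
        ψ.Realize (Sum.elim (fun p => b (q' p.1) p.2) e))

/-- Body of the dividing condition, with the elementary extension `N` made explicit. -/
def DividesBody (L : FirstOrder.Language.{u, v}) (M : Type w) [L.Structure M] (A : Set M)
    (nx ℓ : ℕ) (φ : L.Formula (Fin nx ⊕ Fin ℓ)) (a : Fin ℓ → M) (k : ℕ)
    (N : Type w) [L.Structure N] : Prop :=
  ∃ (f : M ↪ₑ[L] N) (b : ℚ → Fin ℓ → N) (q₀ : ℚ),
    OrderIndiscernibleOver L N (⇑f '' A) ℓ b ∧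
    b q₀ = ⇑f ∘ a ∧
    ∀ q : Fin k → ℚ, Function.Injective q →
      ¬ ∃ x : Fin nx → N, ∀ i : Fin k, φ.Realize (Sum.elim x (b (q i)))

/-- The formula `φ(x̄; ā)` divides over `A`: there are `k < ω`, an elementary extension
`N` of `M` and a ℚ-indexed family of `ℓ`-tuples, order-indiscernible over `A`, containing
`ā`, along which `φ` is `k`-inconsistent. -/
def Divides (L : FirstOrder.Language.{u, v}) (M : Type w) [iM : L.Structure M] (A : Set M)
    (nx ℓ : ℕ) (φ : L.Formula (Fin nx ⊕ Fin ℓ)) (a : Fin ℓ → M) : Prop :=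
  ∃ (k : ℕ) (N : Type w) (iN : L.Structure N),
    @DividesBody L M iM A nx ℓ φ a k N iN

/-- Two finite tuples of rationals (given as lists) have the same quantifier-free type
over the finite set `I₀ ⊆ ℚ`. -/
def SameQfType (I₀ : Finset ℚ) (t t' : List ℚ) : Prop :=
  t.length = t'.length ∧
  (∀ (i j : ℕ) (hi : i < t.length) (hj : j < t.length)
      (hi' : i < t'.length) (hj' : j < t'.length),
      (t.get ⟨i, hi⟩ < t.get ⟨j, hj⟩ ↔ t'.get ⟨i, hi'⟩ < t'.get ⟨j, hj'⟩) ∧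
      (t.get ⟨i, hi⟩ = t.get ⟨j, hj⟩ ↔ t'.get ⟨i, hi'⟩ = t'.get ⟨j, hj'⟩)) ∧
  (∀ (i : ℕ) (hi : i < t.length) (hi' : i < t'.length), ∀ c ∈ I₀,
      (t.get ⟨i, hi⟩ < c ↔ t'.get ⟨i, hi'⟩ < c) ∧
      (t.get ⟨i, hi⟩ = c ↔ t'.get ⟨i, hi'⟩ = c))

/-- The tuples (lists) `c` and `c'` from `N` satisfy the same `L`-formulas with
parameters from `A ⊆ N`. -/
def SameTypeOver (L : FirstOrder.Language.{u, v}) (N : Type w) [L.Structure N]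
    (A : Set N) (c c' : List N) : Prop :=
  ∀ (n k : ℕ) (hc : c.length = n) (hc' : c'.length = n)
    (ψ : L.Formula (Fin n ⊕ Fin k)) (e : Fin k → N), (∀ i, e i ∈ A) →
    (ψ.Realize (Sum.elim (fun i => c.get (Fin.cast hc.symm i)) e) ↔
      ψ.Realize (Sum.elim (fun i => c'.get (Fin.cast hc'.symm i)) e))

/-- The family `b`, assigning to each finite tuple of rationals a finite tuple of
elements of `N`, is ℚ-indiscernible over `A` relative to `I₀`: whenever two finite
sequences of index tuples have blockwise equal lengths and their concatenations have
the same quantifier-free type over `I₀`, the concatenations of the corresponding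
`b`-tuples satisfy the same formulas with parameters from `A`. -/
def QIndiscernibleOver (L : FirstOrder.Language.{u, v}) (N : Type w) [L.Structure N]
    (A : Set N) (I₀ : Finset ℚ) (b : List ℚ → List N) : Prop :=
  ∀ S S' : List (List ℚ),
    List.Forall₂ (fun s s' => s.length = s'.length) S S' →
    SameQfType I₀ S.flatten S'.flatten →
    SameTypeOver L N A ((S.map b).flatten) ((S'.map b).flatten)

/-- Body of the shearing condition, with the elementary extension `N` made explicit.
Here `I₁.sort (· ≤ ·)` is the increasing enumeration `t̄` of `I₁`. -/
def ShearsBody (L : FirstOrder.Language.{u, v}) (M : Type w) [L.Structure M] (A : Set M)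
    (nx ℓ : ℕ) (φ : L.Formula (Fin nx ⊕ Fin ℓ)) (a : Fin ℓ → M)
    (I₀ I₁ : Finset ℚ) (N : Type w) [L.Structure N] : Prop :=
  ∃ (f : M ↪ₑ[L] N) (b : List ℚ → List N),
    -- the length of `b s` depends only on the length of `s`
    (∀ s s' : List ℚ, s.length = s'.length → (b s).length = (b s').length) ∧
    -- (i) ℚ-indiscernibility over `A` relative to `I₀`
    QIndiscernibleOver L N (⇑f '' A) I₀ b ∧
    -- (ii) `b` at the increasing enumeration of `I₁` is `ā`
    b (I₁.sort (· ≤ ·)) = List.ofFn (⇑f ∘ a) ∧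
    -- (iii) finitely many instances of `φ` along tuples with the same qf type over `I₀`
    -- as `t̄` are jointly unsatisfiable
    ∃ (kk : ℕ) (ts : Fin kk → List ℚ) (hlen : ∀ i, (b (ts i)).length = ℓ),
      (∀ i, SameQfType I₀ (I₁.sort (· ≤ ·)) (ts i)) ∧
      ¬ ∃ x : Fin nx → N, ∀ i : Fin kk,
        φ.Realize (Sum.elim x fun j => (b (ts i)).get (Fin.cast (hlen i).symm j))

/-- `φ(x̄; ā)` `(I₀, I₁)`-shears over `A` for the context of the linear order ℚ. -/
def Shears (L : FirstOrder.Language.{u, v}) (M : Type w) [iM : L.Structure M] (A : Set M)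
    (nx ℓ : ℕ) (φ : L.Formula (Fin nx ⊕ Fin ℓ)) (a : Fin ℓ → M)
    (I₀ I₁ : Finset ℚ) : Prop :=
  I₀ ⊆ I₁ ∧
  ∃ (N : Type w) (iN : L.Structure N),
    @ShearsBody L M iM A nx ℓ φ a I₀ I₁ N iN

lemma key_indisc {L : FirstOrder.Language.{u, v}} {N : Type w} [L.Structure N] {A : Set N}
    {ℓ : ℕ} {b : ℚ → Fin ℓ → N} (hind : OrderIndiscernibleOver L N A ℓ b)
    {m k : ℕ} (ψ : L.Formula ((Fin m × Fin ℓ) ⊕ Fin k)) (e : Fin k → N)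
    (he : ∀ i, e i ∈ A) (r r' : Fin m → ℚ)
    (hlt : ∀ i j, r i < r j ↔ r' i < r' j) :
    ψ.Realize (Sum.elim (fun pr => b (r pr.1) pr.2) e) ↔
      ψ.Realize (Sum.elim (fun pr => b (r' pr.1) pr.2) e) := by
  classical
  set c : Fin m → ℕ := fun i => (Finset.univ.filter (fun j => r j < r i)).card with hcdef
  have hceq : ∀ i j, r i = r j → c i = c j := by
    intro i j h
    simp only [hcdef, h]
  have hmono : ∀ i j, r i < r j → c i < c j := by
    intro i j hij
    apply Finset.card_lt_card
    constructor
    · intro x hx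
      simp only [Finset.mem_filter, Finset.mem_univ, true_and] at hx ⊢
      exact hx.trans hij
    · intro hsub
      have hi : i ∈ Finset.univ.filter (fun x => r x < r j) := by
        simp [hij]
      have := hsub hi
      simp at this
  have hiff : ∀ i j, r i < r j ↔ c i < c j := by
    intro i j
    refine ⟨hmono i j, fun h => ?_⟩
    rcases lt_trichotomy (r i) (r j) with h1 | h1 | h1
    · exact h1
    · exact absurd (hceq i j h1) (by omega)
    · exact absurd (hmono j i h1) (by omega)
  have hreq : ∀ i j, r i = r j ↔ r' i = r' j := by
    intro i j
    have h1 : r i = r j ↔ ¬r i < r j ∧ ¬r j < r i :=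
      ⟨fun h => by simp [h], fun ⟨ha, hb⟩ => le_antisymm (not_lt.1 hb) (not_lt.1 ha)⟩
    have h2 : r' i = r' j ↔ ¬r' i < r' j ∧ ¬r' j < r' i :=
      ⟨fun h => by simp [h], fun ⟨ha, hb⟩ => le_antisymm (not_lt.1 hb) (not_lt.1 ha)⟩
    rw [h1, h2, hlt, hlt]
  have hiff' : ∀ i j, r' i < r' j ↔ c i < c j := fun i j => (hlt i j).symm.trans (hiff i j)
  have hcm : ∀ i, c i < m := by
    intro i
    have hss : (Finset.univ.filter (fun j => r j < r i)) ⊂ Finset.univ := by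
      refine ⟨Finset.subset_univ _, fun hsub => ?_⟩
      have := hsub (Finset.mem_univ i)
      simp at this
    have := Finset.card_lt_card hss
    simpa using this
  set π : Fin m → Fin m := fun i => ⟨c i, hcm i⟩ with hπdef
  set P : Finset (Fin m) := Finset.univ.image π with hPdef
  set ρ := P.orderIsoOfFin rfl with hρdef
  have hρ : ∀ v : Fin P.card, ∃ i, π i = (ρ v : Fin m) := by
    intro v
    have := (ρ v).2
    obtain ⟨i, _, hi⟩ := Finset.mem_image.mp this
    exact ⟨i, hi⟩
  choose jj hjj using hρ
  have hπlt : ∀ i i', π i < π i' ↔ r i < r i' := by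
    intro i i'
    rw [Fin.lt_def]
    exact (hiff i i').symm
  have hπeq : ∀ i i', π i = π i' → r i = r i' := by
    intro i i' h
    have hcc : c i = c i' := congrArg Fin.val h
    rcases lt_trichotomy (r i) (r i') with h1 | h1 | h1
    · exact absurd (hmono _ _ h1) (by omega)
    · exact h1
    · exact absurd (hmono _ _ h1) (by omega)
  set q : Fin P.card → ℚ := fun v => r (jj v) with hqdef
  set q' : Fin P.card → ℚ := fun v => r' (jj v) with hq'def
  have hρmono : ∀ v w : Fin P.card, v < w → π (jj v) < π (jj w) := by
    intro v w hvw
    have : ρ v < ρ w := (OrderIso.lt_iff_lt ρ).mpr hvw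
    rw [← Subtype.coe_lt_coe] at this
    rwa [hjj, hjj]
  have hq : StrictMono q := by
    intro v w hvw
    exact (hπlt _ _).mp (hρmono v w hvw)
  have hq' : StrictMono q' := by
    intro v w hvw
    exact (hlt _ _).mp ((hπlt _ _).mp (hρmono v w hvw))
  set πh : Fin m → Fin P.card := fun i => ρ.symm ⟨π i, by rw [hPdef]; exact Finset.mem_image_of_mem _ (Finset.mem_univ i)⟩ with hπhdef
  have hπjπ : ∀ i, π (jj (πh i)) = π i := by
    intro i
    rw [hjj]
    simp [hπhdef]
  have hqπ : ∀ i, q (πh i) = r i := fun i => hπeq _ _ (hπjπ i)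
  have hq'π : ∀ i, q' (πh i) = r' i := fun i => (hreq _ _).mp (hπeq _ _ (hπjπ i))
  set g : (Fin m × Fin ℓ) ⊕ Fin k → (Fin P.card × Fin ℓ) ⊕ Fin k :=
    Sum.map (fun pr => (πh pr.1, pr.2)) id with hgdef
  have hmain := hind P.card k (ψ.relabel g) e he q q' hq hq'
  rw [Language.Formula.realize_relabel, Language.Formula.realize_relabel] at hmain
  have e1 : (Sum.elim (fun pr : Fin P.card × Fin ℓ => b (q pr.1) pr.2) e) ∘ g =
      Sum.elim (fun pr : Fin m × Fin ℓ => b (r pr.1) pr.2) e := by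
    funext x
    rcases x with pr | i
    · simp [hgdef, hqπ pr.1]
    · simp [hgdef]
  have e2 : (Sum.elim (fun pr : Fin P.card × Fin ℓ => b (q' pr.1) pr.2) e) ∘ g =
      Sum.elim (fun pr : Fin m × Fin ℓ => b (r' pr.1) pr.2) e := by
    funext x
    rcases x with pr | i
    · simp [hgdef, hq'π pr.1]
    · simp [hgdef]
  rwa [e1, e2] at hmain

def tsel (p n₁ : ℕ) (S : List (List ℚ)) : List ℚ :=
  S.filterMap (fun s => if s.length = n₁ then some (s.getD p 0) else none)

lemma tsel_cons_pos (p n₁ : ℕ) (s : List ℚ) (S : List (List ℚ)) (h : s.length = n₁) :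
    tsel p n₁ (s :: S) = s.getD p 0 :: tsel p n₁ S := by simp [tsel, h]

lemma tsel_cons_neg (p n₁ : ℕ) (s : List ℚ) (S : List (List ℚ)) (h : ¬ s.length = n₁) :
    tsel p n₁ (s :: S) = tsel p n₁ S := by simp [tsel, h]

lemma tsel_len (p n₁ : ℕ) {S S' : List (List ℚ)}
    (h : List.Forall₂ (fun s s' => s.length = s'.length) S S') :
    (tsel p n₁ S).length = (tsel p n₁ S').length := by
  induction h with
  | nil => rfl
  | cons hs hS ih =>
    rename_i s s' S₁ S₁'
    by_cases hc : s.length = n₁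
    · rw [tsel_cons_pos _ _ _ _ hc, tsel_cons_pos _ _ _ _ (hs ▸ hc)]
      simp [ih]
    · rw [tsel_cons_neg _ _ _ _ hc, tsel_cons_neg _ _ _ _ (fun hh => hc (hs ▸ hh))]
      exact ih

lemma tsel_pos (p n₁ : ℕ) (hp : p < n₁) :
    ∀ (S : List (List ℚ)) (i : ℕ) (hi : i < (tsel p n₁ S).length),
    ∃ (pos : ℕ) (hpos : pos < S.flatten.length),
      (tsel p n₁ S)[i] = S.flatten[pos] ∧
      ∀ S' : List (List ℚ), List.Forall₂ (fun s s' => s.length = s'.length) S S' →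
        ∃ (hpos' : pos < S'.flatten.length) (hi' : i < (tsel p n₁ S').length),
          (tsel p n₁ S')[i] = S'.flatten[pos] := by
  intro S
  induction S with
  | nil => intro i hi; simp [tsel] at hi
  | cons s S ih =>
    intro i hi
    by_cases hc : s.length = n₁
    · rw [tsel_cons_pos _ _ _ _ hc] at hi
      rcases i with _ | i
      · -- head
        refine ⟨p, by simp only [List.flatten_cons, List.length_append]; omega, ?_, ?_⟩
        · simp only [tsel_cons_pos _ _ _ _ hc, List.getElem_cons_zero, List.flatten_cons]
          rw [List.getElem_append_left (by omega), List.getD_eq_getElem _ _ (by omega)]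
        · intro S' hS'
          rcases hS' with _ | ⟨hs, hS⟩
          rename_i s' S''
          have hc' : s'.length = n₁ := hs ▸ hc
          refine ⟨by simp only [List.flatten_cons, List.length_append]; omega,
            by simp only [tsel_cons_pos _ _ _ _ hc']; exact Nat.succ_pos _, ?_⟩
          simp only [tsel_cons_pos _ _ _ _ hc', List.getElem_cons_zero, List.flatten_cons]
          rw [List.getElem_append_left (by omega), List.getD_eq_getElem _ _ (by omega)]
      · -- tail
        have hi' : i < (tsel p n₁ S).length := by simpa using hi
        obtain ⟨pos, hpos, heq, hrest⟩ := ih i hi'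
        refine ⟨s.length + pos, by simp only [List.flatten_cons, List.length_append]; omega, ?_, ?_⟩
        · simp only [tsel_cons_pos _ _ _ _ hc, List.getElem_cons_succ, List.flatten_cons]
          rw [List.getElem_append_right (by omega)]
          simp only [Nat.add_sub_cancel_left]
          exact heq
        · intro S' hS'
          rcases hS' with _ | ⟨hs, hS⟩
          rename_i s' S''
          have hc' : s'.length = n₁ := hs ▸ hc
          obtain ⟨hpos', hi'', heq'⟩ := hrest S'' hS
          refine ⟨by simp only [List.flatten_cons, List.length_append]; omega,
            by simp only [tsel_cons_pos _ _ _ _ hc', List.length_cons]; omega, ?_⟩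
          simp only [tsel_cons_pos _ _ _ _ hc', List.getElem_cons_succ, List.flatten_cons, hs]
          rw [List.getElem_append_right (by omega)]
          simp only [Nat.add_sub_cancel_left]
          exact heq'
    · rw [tsel_cons_neg _ _ _ _ hc] at hi
      obtain ⟨pos, hpos, heq, hrest⟩ := ih i hi
      refine ⟨s.length + pos, by simp only [List.flatten_cons, List.length_append]; omega, ?_, ?_⟩
      · simp only [tsel_cons_neg _ _ _ _ hc, List.flatten_cons]
        rw [List.getElem_append_right (by omega)]
        simp only [Nat.add_sub_cancel_left]
        exact heq
      · intro S' hS'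
        rcases hS' with _ | ⟨hs, hS⟩
        rename_i s' S''
        have hc' : ¬ s'.length = n₁ := fun hh => hc (hs ▸ hh)
        obtain ⟨hpos', hi'', heq'⟩ := hrest S'' hS
        refine ⟨by simp only [List.flatten_cons, List.length_append]; omega,
          by simp only [tsel_cons_neg _ _ _ _ hc']; exact hi'', ?_⟩
        simp only [tsel_cons_neg _ _ _ _ hc', List.flatten_cons, hs]
        rw [List.getElem_append_right (by omega)]
        simp only [Nat.add_sub_cancel_left]
        exact heq'

lemma flatmap_eq {N : Type*} (p n₁ : ℕ) (g : ℚ → List N) (S : List (List ℚ)) :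
    (S.map (fun s => if s.length = n₁ then g (s.getD p 0) else [])).flatten
      = ((tsel p n₁ S).map g).flatten := by
  induction S with
  | nil => rfl
  | cons s S ih =>
    by_cases hc : s.length = n₁
    · rw [tsel_cons_pos _ _ _ _ hc]
      simp only [List.map_cons, List.flatten_cons, if_pos hc, ih]
    · rw [tsel_cons_neg _ _ _ _ hc]
      simp only [List.map_cons, List.flatten_cons, if_neg hc, List.nil_append, ih]

lemma flatlen {N : Type*} {ℓ : ℕ} (g : ℚ → List N) (hg : ∀ x, (g x).length = ℓ)
    (T : List ℚ) : ((T.map g).flatten).length = ℓ * T.length := by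
  induction T with
  | nil => rfl
  | cons q T ih =>
    simp only [List.map_cons, List.flatten_cons, List.length_append, hg, ih, List.length_cons]
    ring

lemma flatget {N : Type*} {ℓ : ℕ} (g : ℚ → List N) (hg : ∀ x, (g x).length = ℓ) :
    ∀ (T : List ℚ) (i j : ℕ) (hi : i < T.length) (hj : j < ℓ),
    ∃ h : ℓ * i + j < ((T.map g).flatten).length,
      ((T.map g).flatten)[ℓ * i + j] = (g T[i])[j]'(by rw [hg]; exact hj) := by
  intro T
  induction T with
  | nil => intro i j hi hj; simp at hi
  | cons q T ih =>
    intro i j hi hj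
    have hlen : ((q :: T).map g).flatten.length = ℓ * (T.length + 1) := by
      rw [flatlen g hg]; simp
    rcases i with _ | i
    · have hb : ℓ * 0 + j < ((q :: T).map g).flatten.length := by
        rw [hlen]
        have h1 : ℓ * 1 ≤ ℓ * (T.length + 1) := Nat.mul_le_mul_left ℓ (by omega)
        omega
      refine ⟨hb, ?_⟩
      simp only [List.map_cons, List.flatten_cons]
      simp only [Nat.mul_zero, Nat.zero_add] at hb ⊢
      rw [List.getElem_append_left (by rw [hg]; exact hj)]
      simp
    · have hi' : i < T.length := by simp only [List.length_cons] at hi; omega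
      obtain ⟨h, heq⟩ := ih i j hi' hj
      have harith : ℓ * (i + 1) + j = (g q).length + (ℓ * i + j) := by rw [hg]; ring
      have hb : ℓ * (i + 1) + j < ((q :: T).map g).flatten.length := by
        simp only [List.map_cons, List.flatten_cons, List.length_append]
        omega
      refine ⟨hb, ?_⟩
      simp only [List.map_cons, List.flatten_cons]
      rw [List.getElem_append_right (by omega)]
      have hsub : ℓ * (i + 1) + j - (g q).length = ℓ * i + j := by omega
      simp only [hsub]
      rw [heq]
      simp

lemma getElem_congr_idx' {α : Type*} (l : List α) (i j : ℕ) (h : i = j) (hi : i < l.length) :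
    l[i] = l[j]'(h ▸ hi) := by subst h; rfl
lemma flat_get_eval {N : Type*} {ℓ : ℕ} (hℓ : 0 < ℓ) (bb : ℚ → Fin ℓ → N) (T : List ℚ)
    (i : ℕ) (hi : i < ((T.map (fun x => List.ofFn (bb x))).flatten).length) :
    ∃ (hd : i / ℓ < T.length),
      ((T.map (fun x => List.ofFn (bb x))).flatten)[i]
        = bb (T[i / ℓ]'hd) ⟨i % ℓ, Nat.mod_lt _ hℓ⟩ := by
  have hg : ∀ x, ((fun x => List.ofFn (bb x)) x).length = ℓ := by simp
  have hlen := flatlen _ hg T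
  have hd : i / ℓ < T.length := by
    rw [hlen] at hi
    rw [Nat.div_lt_iff_lt_mul hℓ]
    calc i < ℓ * T.length := hi
    _ = T.length * ℓ := Nat.mul_comm _ _
  obtain ⟨h, heq⟩ := flatget _ hg T (i / ℓ) (i % ℓ) hd (Nat.mod_lt _ hℓ)
  refine ⟨hd, ?_⟩
  have hi' : ℓ * (i / ℓ) + i % ℓ = i := Nat.div_add_mod i ℓ
  rw [getElem_congr_idx' _ i (ℓ * (i / ℓ) + i % ℓ) hi'.symm hi, heq]
  simp [List.getElem_ofFn]

/-- **Corollary 5.8.** If `φ(x̄; ā)` divides over `A` in `M`, then for every finite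
`I₀ ⊆ ℚ` and every `t ∈ ℚ \ I₀`, setting `I₁ = I₀ ∪ {t}`, the formula `φ(x̄; ā)`
`(I₀, I₁)`-shears over `A` for the context of the linear order ℚ. -/
theorem dividing_implies_shearing_rat (L : FirstOrder.Language.{u, v}) (M : Type w)
    [L.Structure M] (A : Set M) (nx ℓ : ℕ)
    (φ : L.Formula (Fin nx ⊕ Fin ℓ)) (a : Fin ℓ → M)
    (hdiv : Divides L M A nx ℓ φ a)
    (I₀ : Finset ℚ) (t : ℚ) (ht : t ∉ I₀) :
    Shears L M A nx ℓ φ a I₀ (insert t I₀) := by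
  classical
  obtain ⟨k, N, iN, f, b, q₀, hind, hb0, hincons⟩ := hdiv
  refine ⟨Finset.subset_insert _ _, N, iN, f, ?_⟩
  set tl : List ℚ := ((insert t I₀).sort (· ≤ ·)) with htl
  have htmem : t ∈ tl := (Finset.mem_sort _).2 (Finset.mem_insert_self t I₀)
  set p : ℕ := tl.idxOf t with hpdef
  have hpl : p < tl.length := List.idxOf_lt_length_iff.2 htmem
  have hgetp : tl[p] = t := List.getElem_idxOf hpl
  have hnodup : tl.Nodup := (insert t I₀).sort_nodup _
  have hmemI₁ : ∀ (j : ℕ) (hj : j < tl.length), tl[j] ∈ insert t I₀ := fun j hj =>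
    (Finset.mem_sort _).1 (List.getElem_mem _)
  have hne : ∀ (j : ℕ) (hj : j < tl.length), j ≠ p → tl[j] ∈ I₀ ∧ tl[j] ≠ t := by
    intro j hj hjp
    have h1 : tl[j] ≠ t := by
      intro h
      exact hjp (hnodup.getElem_inj_iff.mp (h.trans hgetp.symm))
    have h2 := hmemI₁ j hj
    rw [Finset.mem_insert] at h2
    exact ⟨h2.resolve_left h1, h1⟩
  set g0 : ℚ → List N := fun x => List.ofFn (b (x - t + q₀)) with hg0
  set B : List ℚ → List N := fun s => if s.length = tl.length then g0 (s.getD p 0) else []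
    with hB
  have hg0len : ∀ x, (g0 x).length = ℓ := by simp [hg0]
  have hBlen : ∀ s, (B s).length = if s.length = tl.length then ℓ else 0 := by
    intro s
    by_cases hcs : s.length = tl.length
    · simp only [hB, if_pos hcs, hg0len]
    · simp only [hB, if_neg hcs]
      rfl
  refine ⟨B, ?_, ?_, ?_, ?_⟩
  · -- length law
    intro s s' h
    rw [hBlen, hBlen, h]
  · -- (i) Q-indiscernibility
    intro S S' hF hqf
    intro n k' hc hc' ψ e he
    have hflat : (S.map B).flatten = ((tsel p tl.length S).map g0).flatten :=
      flatmap_eq p tl.length g0 S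
    have hflat' : (S'.map B).flatten = ((tsel p tl.length S').map g0).flatten :=
      flatmap_eq p tl.length g0 S'
    set T : List ℚ := tsel p tl.length S with hT
    set T' : List ℚ := tsel p tl.length S' with hT'
    have hTlen : T.length = T'.length := tsel_len _ _ hF
    by_cases hℓ : ℓ = 0
    · subst hℓ
      have hval : (Sum.elim (fun i => ((S.map B).flatten).get (Fin.cast hc.symm i)) e)
          = (Sum.elim (fun i => ((S'.map B).flatten).get (Fin.cast hc'.symm i)) e) := by
        funext x
        rcases x with i | i
        · have hn : n = 0 := by
            rw [← hc, hflat, flatlen g0 hg0len]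
            simp
          subst hn
          exact absurd i.2 (by omega)
        · rfl
      rw [hval]
    · have hℓpos : 0 < ℓ := Nat.pos_of_ne_zero hℓ
      have hlenc : (S.map B).flatten.length = ℓ * T.length := by
        rw [hflat]; exact flatlen g0 hg0len T
      have hlenc' : (S'.map B).flatten.length = ℓ * T'.length := by
        rw [hflat']; exact flatlen g0 hg0len T'
      have hn : n = ℓ * T.length := by rw [← hc, hlenc]
      set m := T.length with hm
      set r : Fin m → ℚ := fun v => T[v.val]'(v.2) - t + q₀ with hr
      set r' : Fin m → ℚ := fun v => T'[v.val]'(by rw [← hTlen]; exact v.2) - t + q₀ with hr'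
      have hlt : ∀ v w, r v < r w ↔ r' v < r' w := by
        intro v w
        have h1 : r v < r w ↔ T[v.val]'(v.2) < T[w.val]'(w.2) := by
          constructor <;> intro h <;> [skip; skip] <;> simp only [hr] at * <;> linarith
        have h2 : r' v < r' w ↔ T'[v.val]'(by rw [← hTlen]; exact v.2)
            < T'[w.val]'(by rw [← hTlen]; exact w.2) := by
          constructor <;> intro h <;> [skip; skip] <;> simp only [hr'] at * <;> linarith
        rw [h1, h2]
        obtain ⟨posv, hposv, heqv, hrestv⟩ := tsel_pos p tl.length hpl S v.val v.2
        obtain ⟨posw, hposw, heqw, hrestw⟩ := tsel_pos p tl.length hpl S w.val w.2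
        obtain ⟨hposv', hiv', heqv'⟩ := hrestv S' hF
        obtain ⟨hposw', hiw', heqw'⟩ := hrestw S' hF
        have hcomp := (hqf.2.1 posv posw hposv hposw
          (by rw [← hqf.1]; exact hposv) (by rw [← hqf.1]; exact hposw)).1
        simp only [List.get_eq_getElem] at hcomp
        replace heqv : T[v.val]'(v.2) = S.flatten[posv] := heqv
        replace heqw : T[w.val]'(w.2) = S.flatten[posw] := heqw
        replace heqv' : T'[v.val]'(by rw [← hTlen]; exact v.2) = S'.flatten[posv] := heqv'
        replace heqw' : T'[w.val]'(by rw [← hTlen]; exact w.2) = S'.flatten[posw] := heqw'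
        rw [heqv, heqw, heqv', heqw']
        exact hcomp
      -- pointwise descriptions
      have hpt : ∀ i : Fin n, ((S.map B).flatten).get (Fin.cast hc.symm i)
          = b (r ⟨i.val / ℓ, by rw [Nat.div_lt_iff_lt_mul hℓpos, Nat.mul_comm]; exact lt_of_lt_of_eq i.2 hn⟩)
            ⟨i.val % ℓ, Nat.mod_lt _ hℓpos⟩ := by
        intro i
        rw [List.get_eq_getElem]
        simp only [Fin.coe_cast]
        have hib : i.val < (S.map B).flatten.length := by rw [hc]; exact i.2
        simp only [hflat] at hib ⊢
        have hg0eq : (T.map g0).flatten = (T.map (fun x => List.ofFn (b (x - t + q₀)))).flatten := rfl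
        obtain ⟨hd, heq⟩ := flat_get_eval hℓpos (fun x => b (x - t + q₀)) T i.val (by exact hib)
        exact heq
      have hpt' : ∀ i : Fin n, ((S'.map B).flatten).get (Fin.cast hc'.symm i)
          = b (r' ⟨i.val / ℓ, by rw [Nat.div_lt_iff_lt_mul hℓpos, Nat.mul_comm]; exact lt_of_lt_of_eq i.2 hn⟩)
            ⟨i.val % ℓ, Nat.mod_lt _ hℓpos⟩ := by
        intro i
        rw [List.get_eq_getElem]
        simp only [Fin.coe_cast]
        have hib : i.val < (S'.map B).flatten.length := by rw [hc']; exact i.2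
        simp only [hflat'] at hib ⊢
        obtain ⟨hd, heq⟩ := flat_get_eval hℓpos (fun x => b (x - t + q₀)) T' i.val (by exact hib)
        exact heq
      set hfun : Fin n → Fin m × Fin ℓ := fun i =>
        (⟨i.val / ℓ, by rw [Nat.div_lt_iff_lt_mul hℓpos, Nat.mul_comm]; exact lt_of_lt_of_eq i.2 hn⟩,
         ⟨i.val % ℓ, Nat.mod_lt _ hℓpos⟩) with hhfun
      set gg : (Fin n ⊕ Fin k') → ((Fin m × Fin ℓ) ⊕ Fin k') := Sum.map hfun id with hgg
      have hmain := key_indisc hind (ψ.relabel gg) e he r r' hlt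
      rw [Language.Formula.realize_relabel, Language.Formula.realize_relabel] at hmain
      have e1 : (Sum.elim (fun pr : Fin m × Fin ℓ => b (r pr.1) pr.2) e) ∘ gg
          = Sum.elim (fun i : Fin n => ((S.map B).flatten).get (Fin.cast hc.symm i)) e := by
        funext x
        rcases x with i | i
        · simp only [Function.comp_apply, hgg, Sum.map_inl, Sum.elim_inl, hhfun]
          rw [hpt i]
        · simp [hgg]
      have e2 : (Sum.elim (fun pr : Fin m × Fin ℓ => b (r' pr.1) pr.2) e) ∘ gg
          = Sum.elim (fun i : Fin n => ((S'.map B).flatten).get (Fin.cast hc'.symm i)) e := by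
        funext x
        rcases x with i | i
        · simp only [Function.comp_apply, hgg, Sum.map_inl, Sum.elim_inl, hhfun]
          rw [hpt' i]
        · simp [hgg]
      rwa [e1, e2] at hmain
  · -- (ii)
    have hcond : tl.length = tl.length := rfl
    simp only [hB, if_pos hcond, hg0]
    rw [List.getD_eq_getElem _ _ hpl, hgetp]
    have : t - t + q₀ = q₀ := by ring
    rw [this, hb0]
  · -- (iii)
    set F : Finset ℚ := I₀.filter (fun c => t < c) with hF
    set δ : ℚ := if h : F.Nonempty then F.min' h - t else 1 with hδ
    have hδpos : 0 < δ := by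
      by_cases h : F.Nonempty
      · simp only [hδ, dif_pos h]
        have hm := F.min'_mem h
        have hm2 : F.min' h ∈ Finset.filter (fun c => t < c) I₀ := hm
        rw [Finset.mem_filter] at hm2
        linarith [hm2.2]
      · simp [hδ, dif_neg h]
    have hδle : ∀ c ∈ I₀, t < c → t + δ ≤ c := by
      intro c hcI htc
      have hcF : c ∈ F := by rw [hF, Finset.mem_filter]; exact ⟨hcI, htc⟩
      have hnem : F.Nonempty := ⟨c, hcF⟩
      simp only [hδ, dif_pos hnem]
      have := F.min'_le c hcF
      linarith
    set ε : Fin k → ℚ := fun i => δ / (i.val + 2) with hε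
    have hcast2 : ∀ i : Fin k, (0:ℚ) < (i.val : ℚ) + 2 := by
      intro i
      have : (0:ℚ) ≤ (i.val : ℚ) := Nat.cast_nonneg _
      linarith
    have hεpos : ∀ i, 0 < ε i := fun i => div_pos hδpos (hcast2 i)
    have hεlt : ∀ i, ε i < δ := by
      intro i
      apply div_lt_self hδpos
      have h0 : (0:ℚ) ≤ (i.val : ℚ) := Nat.cast_nonneg _
      linarith
    have hεinj : Function.Injective ε := by
      intro i j h
      simp only [hε] at h
      rw [div_eq_div_iff (ne_of_gt (hcast2 i)) (ne_of_gt (hcast2 j))] at h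
      have h3 : (i.val : ℚ) = (j.val : ℚ) := by
        have hδne : δ ≠ 0 := ne_of_gt hδpos
        have h4 := mul_left_cancel₀ hδne h
        linarith
      exact Fin.ext (Nat.cast_injective h3)
    have hεfacts : ∀ (i : Fin k) (c : ℚ), c ∈ I₀ →
        ((t < c ↔ t + ε i < c) ∧ (c < t ↔ c < t + ε i) ∧ t ≠ c ∧ t + ε i ≠ c) := by
      intro i c hcI
      have htc : t ≠ c := fun h => ht (h ▸ hcI)
      have h1 : t < c → t + ε i < c := fun h =>
        lt_of_lt_of_le (by linarith [hεlt i]) (hδle c hcI h)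
      refine ⟨⟨h1, fun h => lt_trans (by linarith [hεpos i]) h⟩, ⟨?_, ?_⟩, htc, ?_⟩
      · intro h; linarith [hεpos i]
      · intro h
        by_contra hcc
        push_neg at hcc
        have h4 : t < c := lt_of_le_of_ne hcc htc
        have := h1 h4
        linarith
      · intro h
        rcases lt_trichotomy t c with h4 | h4 | h4
        · have := h1 h4; linarith
        · exact htc h4
        · linarith [hεpos i]
    set ts : Fin k → List ℚ := fun i => tl.set p (t + ε i) with hts
    have htslen : ∀ i, (ts i).length = tl.length := fun i => List.length_set ..
    have htsget : ∀ (i : Fin k) (j : ℕ) (hj : j < tl.length),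
        (ts i)[j]'(by rw [htslen]; exact hj) = if p = j then t + ε i else tl[j] := by
      intro i j hj
      simp [hts, List.getElem_set]
    have hBts : ∀ i, B (ts i) = List.ofFn (b (t + ε i - t + q₀)) := by
      intro i
      have hcond : (ts i).length = tl.length := htslen i
      simp only [hB, if_pos hcond, hg0]
      rw [List.getD_eq_getElem _ _ (by rw [htslen]; exact hpl)]
      rw [htsget _ _ hpl, if_pos rfl]
    have hlen : ∀ i, (B (ts i)).length = ℓ := by
      intro i; rw [hBts i]; simp
    refine ⟨k, ts, hlen, ?_, ?_⟩
    · -- SameQfType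
      intro i
      refine ⟨(htslen i).symm, ?_, ?_⟩
      · intro j1 j2 hj1 hj2 hj1' hj2'
        have hj1l : j1 < tl.length := hj1
        have hj2l : j2 < tl.length := hj2
        simp only [List.get_eq_getElem]
        simp only [htsget i j1 hj1l, htsget i j2 hj2l]
        by_cases h1 : p = j1 <;> by_cases h2 : p = j2
        · subst h1; subst h2
          rw [if_pos rfl, hgetp]
          simp
        · subst h1
          rw [if_pos rfl, if_neg h2, hgetp]
          obtain ⟨hc2I, hc2t⟩ := hne j2 hj2l (fun hh => h2 hh.symm)
          obtain ⟨ha, hb', hc', hd⟩ := hεfacts i _ hc2I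
          exact ⟨ha, ⟨fun h => absurd h hc', fun h => absurd h hd⟩⟩
        · subst h2
          rw [if_neg h1, if_pos rfl, hgetp]
          obtain ⟨hc1I, hc1t⟩ := hne j1 hj1l (fun hh => h1 hh.symm)
          obtain ⟨ha, hb', hc', hd⟩ := hεfacts i _ hc1I
          exact ⟨hb', ⟨fun h => absurd h.symm hc', fun h => absurd h.symm hd⟩⟩
        · rw [if_neg h1, if_neg h2]
          exact ⟨Iff.rfl, Iff.rfl⟩
      · intro j hj hj' c hcI
        have hjl : j < tl.length := hj
        simp only [List.get_eq_getElem]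
        simp only [htsget i j hjl]
        by_cases h1 : p = j
        · subst h1
          rw [if_pos rfl, hgetp]
          obtain ⟨ha, hb', hc', hd⟩ := hεfacts i c hcI
          exact ⟨ha, ⟨fun h => absurd h hc', fun h => absurd h hd⟩⟩
        · rw [if_neg h1]
          exact ⟨Iff.rfl, Iff.rfl⟩
    · -- unsatisfiable
      rintro ⟨x, hx⟩
      refine hincons (fun i => t + ε i - t + q₀) ?_ ⟨x, ?_⟩
      · intro i j h
        simp only at h
        apply hεinj
        have h2 : ε i = ε j := by linarith
        exact h2
      · intro i
        have := hx i
        have hveq : (fun j => (B (ts i)).get (Fin.cast (hlen i).symm j)) = b (t + ε i - t + q₀) := by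
          funext j
          rw [List.get_eq_getElem]
          simp only [Fin.coe_cast]
          simp only [hBts i]
          simp [List.getElem_ofFn]
        rw [hveq] at this
        exact this
end

section
/- Let G be a triangle-free (K_3-free) simple graph on a vertex type V, and let a⁰, a¹ : ι → V be families of vertices such that a⁰ i is adjacent to a¹ j whenever i ≠ j. Then there do not exist indices i ≠ j and a vertex x such that x is adjacent to all four vertices a⁰ i, a¹ i, a⁰ j, a¹ j. (Hence the family of conditions 'x is a common neighbor of a⁰ i and a¹ i', indexed by i ∈ ι, is 2-inconsistent.) -/
/- The 2-inconsistency in the proof of Fact 6.2 for the triangle-free random graph: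
in a triangle-free graph, given the bipartite complement-of-a-matching configuration,
no vertex is a common neighbor of two distinct "columns". -/

theorem no_common_neighbor_of_two_columns {V ι : Type*} (G : SimpleGraph V)
    (hG : G.CliqueFree 3) (a0 a1 : ι → V)
    (ha : ∀ i j : ι, i ≠ j → G.Adj (a0 i) (a1 j)) :
    ¬ ∃ (i j : ι) (x : V), i ≠ j ∧
        G.Adj x (a0 i) ∧ G.Adj x (a1 i) ∧ G.Adj x (a0 j) ∧ G.Adj x (a1 j) := by
  rintro ⟨i, j, x, hij, h1, h2, h3, h4⟩
  classical
  exact hG _ (SimpleGraph.is3Clique_triple_iff.2 ⟨h1, h4, ha i j hij⟩)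
end

section
/- For every n ≥ 2 there exist a countable type V, a K_{n+1}-free simple graph G on V, and an injective map a : Fin n × ℕ → V such that a(s,i) is adjacent to a(t,j) if and only if s ≠ t and i ≠ j, and for every i ∈ ℕ there is a vertex x adjacent to a(s,i) for every s < n. -/
def GadjAux (n : ℕ) : (Fin n × ℕ ⊕ ℕ) → (Fin n × ℕ ⊕ ℕ) → Prop
  | .inl p, .inl q => p.1 ≠ q.1 ∧ p.2 ≠ q.2
  | .inl p, .inr k => p.2 = k
  | .inr k, .inl p => p.2 = k
  | .inr _, .inr _ => False

def GrAux (n : ℕ) : SimpleGraph (Fin n × ℕ ⊕ ℕ) where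
  Adj := GadjAux n
  symm := by
    constructor
    rintro (p | k) (q | l) h
    · exact ⟨h.1.symm, h.2.symm⟩
    · exact h
    · exact h
    · exact h
  loopless := by
    constructor
    rintro (p | k) h
    · exact h.1 rfl
    · exact h

/- The consistency half of the configuration in the proof of Fact 6.2: in a suitable
countable `K_{n+1}`-free graph containing the complement-of-a-matching configuration,
each condition "x is a common neighbor of the i-th column" is individually
satisfiable. -/

theorem exists_KnFree_graph_with_column_neighbors :
    ∀ n : ℕ, 2 ≤ n →
      ∃ (V : Type) (_ : Countable V) (G : SimpleGraph V) (a : Fin n × ℕ → V),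
        G.CliqueFree (n + 1) ∧
        Function.Injective a ∧
        (∀ p q : Fin n × ℕ, G.Adj (a p) (a q) ↔ p.1 ≠ q.1 ∧ p.2 ≠ q.2) ∧
        (∀ i : ℕ, ∃ x : V, ∀ s : Fin n, G.Adj x (a (s, i))) := by
  intro n hn
  refine ⟨(Fin n × ℕ) ⊕ ℕ, inferInstance, GrAux n, Sum.inl, ?_, Sum.inl_injective, ?_, ?_⟩
  · -- clique free
    intro t ht
    by_cases hk : ∃ k, Sum.inr k ∈ t
    · obtain ⟨k, hkt⟩ := hk
      have hcard : (t.erase (Sum.inr k)).card = n := by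
        rw [Finset.card_erase_of_mem hkt, ht.2]; omega
      have h1 : 1 < (t.erase (Sum.inr k)).card := by omega
      obtain ⟨y, hy, z, hz, hyz⟩ := Finset.one_lt_card.mp h1
      have hyk := Finset.ne_of_mem_erase hy
      have hzk := Finset.ne_of_mem_erase hz
      have hyt := Finset.mem_of_mem_erase hy
      have hzt := Finset.mem_of_mem_erase hz
      have hay : (GrAux n).Adj y (Sum.inr k) := ht.1 hyt hkt hyk
      have haz : (GrAux n).Adj z (Sum.inr k) := ht.1 hzt hkt hzk
      have hayz : (GrAux n).Adj y z := ht.1 hyt hzt hyz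
      match y, z with
      | .inl p, .inl q =>
        exact hayz.2 ((show p.2 = k from hay).trans (show q.2 = k from haz).symm)
      | .inl p, .inr l => exact haz
      | .inr l, _ => exact hay
    · have hinj : Set.InjOn (Sum.elim (fun p => p.1) (fun _ => (⟨0, by omega⟩ : Fin n))) (↑t : Set (Fin n × ℕ ⊕ ℕ)) := by
        intro u hu v hv huv
        by_contra hne
        have hadj := ht.1 hu hv hne
        match u, v with
        | .inl p, .inl q => exact hadj.1 huv
        | .inl p, .inr l => exact hk ⟨l, hv⟩
        | .inr l, _ => exact hk ⟨l, hu⟩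
      have hle := Finset.card_le_card_of_injOn _ (fun _ _ => Finset.mem_univ _) hinj
      rw [ht.2, Finset.card_univ, Fintype.card_fin] at hle
      omega
  · intro p q; exact Iff.rfl
  · intro i
    exact ⟨Sum.inr i, fun s => rfl⟩
end

section
/- Let n > k ≥ 1, let E be a set of (k+1)-element subsets of a type V with no (n+1)-element clique, and let X be any set of k-element subsets of V. On the extended vertex type Option V (with new vertex none, and V embedded via some), let E′ consist of the images of all members of E together with all sets (image of u) ∪ {none} for u ∈ X. Then E′ has an (n+1)-element clique if and only if there exists an n-element clique S of E such that every k-element subset of S belongs to X. -/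
/- The one-point extension criterion justifying the saturation step in the proof of
Claim A.14: adding a new vertex `none` to a (k+1)-uniform hypergraph with no
(n+1)-clique, with new edges prescribed by a set X of k-element subsets, creates an
(n+1)-clique iff some n-element clique has all its k-element subsets in X. -/

/-- A finite subset `S` of `V` is a clique of the `(k+1)`-uniform hypergraph `E`:
every `(k+1)`-element subset of `S` belongs to `E`. -/
def IsHClique {V : Type*} (E : Set (Finset V)) (k : ℕ) (S : Finset V) : Prop :=
  ∀ e : Finset V, e ⊆ S → e.card = k + 1 → e ∈ E

theorem one_point_extension_clique_criterion {V : Type*} [DecidableEq V] (n k : ℕ)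
    (hk : 1 ≤ k) (hkn : k < n)
    (E : Set (Finset V)) (hE : ∀ e ∈ E, e.card = k + 1)
    (hfree : ¬ ∃ S : Finset V, S.card = n + 1 ∧ IsHClique E k S)
    (X : Set (Finset V)) (hX : ∀ u ∈ X, u.card = k)
    (E' : Set (Finset (Option V)))
    (hE'def : E' = {e : Finset (Option V) |
        (∃ e₀ ∈ E, e = e₀.image some) ∨
        (∃ u ∈ X, e = insert none (u.image some))}) :
    (∃ S : Finset (Option V), S.card = n + 1 ∧ IsHClique E' k S) ↔
      (∃ S₀ : Finset V, S₀.card = n ∧ IsHClique E k S₀ ∧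
        ∀ u : Finset V, u ⊆ S₀ → u.card = k → u ∈ X) := by
  have hinj : Function.Injective (some : V → Option V) := Option.some_injective V
  constructor
  · rintro ⟨S, hScard, hSclique⟩
    -- `none ∈ S`, otherwise we get an (n+1)-clique in E
    by_cases hnone : none ∈ S
    · refine ⟨S.eraseNone, ?_, ?_, ?_⟩
      · have : (S.eraseNone.image some).card = (S.erase none).card := by
          rw [Finset.image_some_eraseNone]
        rw [Finset.card_image_of_injective _ hinj, Finset.card_erase_of_mem hnone,
          hScard] at this
        simpa using this
      · intro e he hecard
        have hsub : e.image some ⊆ S := by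
          intro x hx
          simp only [Finset.mem_image] at hx
          obtain ⟨a, ha, rfl⟩ := hx
          have : some a ∈ S.erase none := by
            rw [← Finset.image_some_eraseNone]
            exact Finset.mem_image_of_mem _ (he ha)
          exact Finset.mem_of_mem_erase this
        have := hSclique (e.image some) hsub
          (by rw [Finset.card_image_of_injective _ hinj]; exact hecard)
        rw [hE'def] at this
        rcases this with ⟨e₀, he₀, heq⟩ | ⟨u, _, heq⟩
        · rw [Finset.image_injective hinj heq]; exact he₀
        · exfalso
          have : none ∈ e.image some := heq ▸ Finset.mem_insert_self _ _
          simp at this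
      · intro u hu hucard
        have hsub : insert none (u.image some) ⊆ S := by
          intro x hx
          rcases Finset.mem_insert.1 hx with rfl | hx
          · exact hnone
          · simp only [Finset.mem_image] at hx
            obtain ⟨a, ha, rfl⟩ := hx
            have : some a ∈ S.erase none := by
              rw [← Finset.image_some_eraseNone]
              exact Finset.mem_image_of_mem _ (hu ha)
            exact Finset.mem_of_mem_erase this
        have hcard : (insert none (u.image some)).card = k + 1 := by
          rw [Finset.card_insert_of_notMem (by simp),
            Finset.card_image_of_injective _ hinj, hucard]
        have := hSclique _ hsub hcard
        rw [hE'def] at this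
        rcases this with ⟨e₀, _, heq⟩ | ⟨u', hu', heq⟩
        · exfalso
          have : none ∈ e₀.image some := heq ▸ Finset.mem_insert_self _ _
          simp at this
        · have : u = u' := by
            have h1 : (insert none (u.image some)).erase none
                = (insert none (u'.image some)).erase none := by rw [heq]
            rw [Finset.erase_insert (by simp), Finset.erase_insert (by simp)] at h1
            exact Finset.image_injective hinj h1
          rwa [this]
    · exfalso
      apply hfree
      refine ⟨S.eraseNone, ?_, ?_⟩
      · have : (S.eraseNone.image some).card = (S.erase none).card := by
          rw [Finset.image_some_eraseNone]
        rw [Finset.card_image_of_injective _ hinj, Finset.erase_eq_of_notMem hnone,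
          hScard] at this
        exact this
      · intro e he hecard
        have hsub : e.image some ⊆ S := by
          intro x hx
          simp only [Finset.mem_image] at hx
          obtain ⟨a, ha, rfl⟩ := hx
          simpa using Finset.mem_eraseNone.1 (he ha)
        have := hSclique (e.image some) hsub
          (by rw [Finset.card_image_of_injective _ hinj]; exact hecard)
        rw [hE'def] at this
        rcases this with ⟨e₀, he₀, heq⟩ | ⟨u, _, heq⟩
        · rw [Finset.image_injective hinj heq]; exact he₀
        · exfalso
          have : none ∈ e.image some := heq ▸ Finset.mem_insert_self _ _
          simp at this
  · rintro ⟨S₀, hS₀card, hS₀clique, hS₀X⟩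
    refine ⟨insert none (S₀.image some), ?_, ?_⟩
    · rw [Finset.card_insert_of_notMem (by simp),
        Finset.card_image_of_injective _ hinj, hS₀card]
    · intro e he hecard
      rw [hE'def]
      by_cases hne : none ∈ e
      · right
        have hsub : e.erase none ⊆ S₀.image some := by
          intro x hx
          have := he (Finset.mem_of_mem_erase hx)
          rcases Finset.mem_insert.1 this with rfl | h
          · exact absurd rfl (Finset.ne_of_mem_erase hx)
          · exact h
        obtain ⟨u, hu, hueq⟩ := Finset.subset_image_iff.1 hsub
        refine ⟨u, ?_, ?_⟩
        · apply hS₀X u hu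
          have : (e.erase none).card = k := by
            rw [Finset.card_erase_of_mem hne, hecard]; rfl
          rw [← hueq, Finset.card_image_of_injective _ hinj] at this
          exact this
        · rw [hueq, Finset.insert_erase hne]
      · left
        have hsub : e ⊆ S₀.image some := fun x hx => by
          rcases Finset.mem_insert.1 (he hx) with rfl | h
          · exact absurd hx hne
          · exact h
        obtain ⟨e₀, he₀, he₀eq⟩ := Finset.subset_image_iff.1 hsub
        refine ⟨e₀, ?_, he₀eq.symm⟩
        apply hS₀clique e₀ he₀
        rw [← he₀eq, Finset.card_image_of_injective _ hinj] at hecard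
        exact hecard
end

section
/- Let n > k ≥ 1, let E be a set of (k+1)-element subsets of a type V with no (n+1)-element clique, and fix d ∈ V. On the extended vertex type Option V (with new vertex none, and V embedded via some), let E′ consist of the images of all members of E together with all sets (image of u) ∪ {none}, where u ranges over the k-element subsets of V with d ∉ u and u ∪ {d} ∈ E. Then E′ has no (n+1)-element clique. -/
theorem duplicate_vertex_cliqueFree {V : Type*} [DecidableEq V] (n k : ℕ)
    (hk : 1 ≤ k) (hkn : k < n)
    (E : Set (Finset V)) (hE : ∀ e ∈ E, e.card = k + 1)
    (hfree : ¬ ∃ S : Finset V, S.card = n + 1 ∧ IsHClique E k S)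
    (d : V)
    (E' : Set (Finset (Option V)))
    (hE'def : E' = {e : Finset (Option V) |
        (∃ e₀ ∈ E, e = e₀.image some) ∨
        (∃ u : Finset V, u.card = k ∧ d ∉ u ∧ insert d u ∈ E ∧
          e = insert none (u.image some))}) :
    ¬ ∃ S : Finset (Option V), S.card = n + 1 ∧ IsHClique E' k S := by
  have hinj : Function.Injective (some : V → Option V) := Option.some_injective V
  rintro ⟨S, hScard, hclique⟩
  subst hE'def
  by_cases hnone : none ∈ S
  · by_cases hd : some d ∈ S
    · -- find a (k+1)-subset of S containing both none and some d
      have hsub : ({none, some d} : Finset (Option V)) ⊆ S := by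
        intro x hx; simp at hx; rcases hx with rfl | rfl <;> assumption
      have hcard2 : ({none, some d} : Finset (Option V)).card = 2 := by
        rw [Finset.card_insert_of_notMem (by simp), Finset.card_singleton]
      obtain ⟨e, he1, he2, he3⟩ := Finset.exists_subsuperset_card_eq hsub
        (by omega : ({none, some d} : Finset (Option V)).card ≤ k + 1)
        (by omega : k + 1 ≤ S.card)
      have := hclique e he2 he3
      rcases this with ⟨e₀, _, heq⟩ | ⟨u, _, hdu, _, heq⟩
      · have : none ∈ e₀.image some := by
          rw [← heq]; exact he1 (by simp)
        simp at this
      · have hsome : some d ∈ insert none (u.image some) := by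
          rw [← heq]; exact he1 (by simp)
        simp at hsome
        exact hdu hsome
    · -- duplicate d into T
      set T : Finset V := Finset.eraseNone (S.erase none) with hT
      have hdT : d ∉ T := fun h => hd (Finset.mem_of_mem_erase (Finset.mem_eraseNone.mp h))
      have hTsub : ∀ x ∈ T, some x ∈ S := fun x h =>
        Finset.mem_of_mem_erase (Finset.mem_eraseNone.mp h)
      have hTcard : T.card = n := by
        have h1 : (T.image some) = (S.erase none).erase none := by
          rw [hT, Finset.image_some_eraseNone]
        have h2 : (S.erase none).erase none = S.erase none := by
          apply Finset.erase_eq_of_notMem; simp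
        have := congrArg Finset.card h1
        rw [Finset.card_image_of_injective _ hinj, h2,
          Finset.card_erase_of_mem hnone, hScard] at this
        omega
      apply hfree
      refine ⟨insert d T, by rw [Finset.card_insert_of_notMem hdT, hTcard], ?_⟩
      intro e hesub hecard
      by_cases hde : d ∈ e
      · set u : Finset V := e.erase d with hu
        have hucard : u.card = k := by
          rw [hu, Finset.card_erase_of_mem hde, hecard]; omega
        have huT : u ⊆ T := by
          intro x hx
          have hxe : x ∈ e := Finset.mem_of_mem_erase hx
          have hxd : x ≠ d := Finset.ne_of_mem_erase hx
          rcases Finset.mem_insert.mp (hesub hxe) with h | h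
          · exact absurd h hxd
          · exact h
        have he' : insert none (u.image some) ⊆ S := by
          intro x hx
          rcases Finset.mem_insert.mp hx with rfl | hx
          · exact hnone
          · obtain ⟨y, hy, rfl⟩ := Finset.mem_image.mp hx
            exact hTsub y (huT hy)
        have he'card : (insert none (u.image some)).card = k + 1 := by
          rw [Finset.card_insert_of_notMem (by simp),
            Finset.card_image_of_injective _ hinj, hucard]
        have := hclique _ he' he'card
        rcases this with ⟨e₀, _, heq⟩ | ⟨u', _, _, hmem, heq⟩
        · have : none ∈ e₀.image some := by rw [← heq]; simp
          simp at this
        · have huu : u' = u := by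
            have h1 : (insert none (u'.image some)).erase none = u'.image some :=
              Finset.erase_insert (by simp)
            have h2 : (insert none (u.image some)).erase none = u.image some :=
              Finset.erase_insert (by simp)
            have := congrArg (Finset.erase · none) heq
            simp only [h1, h2] at this
            exact Finset.image_injective hinj this.symm
          rw [huu] at hmem
          rwa [hu, Finset.insert_erase hde] at hmem
      · have heT : e ⊆ T := fun x hx => by
          rcases Finset.mem_insert.mp (hesub hx) with rfl | h
          · exact absurd hx hde
          · exact h
        have he' : e.image some ⊆ S := fun x hx => by
          obtain ⟨y, hy, rfl⟩ := Finset.mem_image.mp hx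
          exact hTsub y (heT hy)
        have he'card : (e.image some).card = k + 1 := by
          rw [Finset.card_image_of_injective _ hinj, hecard]
        rcases hclique _ he' he'card with ⟨e₀, he₀, heq⟩ | ⟨u', _, _, _, heq⟩
        · rwa [Finset.image_injective hinj heq.symm] at he₀
        · have : none ∈ e.image some := by rw [heq]; simp
          simp at this
  · -- no none: S is an image
    apply hfree
    set T : Finset V := Finset.eraseNone S with hT
    have hTsub : ∀ x ∈ T, some x ∈ S := fun x h => Finset.mem_eraseNone.mp h
    have hTcard : T.card = n + 1 := by
      have h1 : T.image some = S.erase none := by rw [hT, Finset.image_some_eraseNone]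
      rw [Finset.erase_eq_of_notMem hnone] at h1
      rw [← hScard, ← h1, Finset.card_image_of_injective _ hinj]
    refine ⟨T, hTcard, ?_⟩
    intro e heT hecard
    have he' : e.image some ⊆ S := fun x hx => by
      obtain ⟨y, hy, rfl⟩ := Finset.mem_image.mp hx
      exact hTsub y (heT hy)
    have he'card : (e.image some).card = k + 1 := by
      rw [Finset.card_image_of_injective _ hinj, hecard]
    rcases hclique _ he' he'card with ⟨e₀, he₀, heq⟩ | ⟨u', _, _, _, heq⟩
    · rwa [Finset.image_injective hinj heq.symm] at he₀
    · have : none ∈ e.image some := by rw [heq]; simp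
      simp at this
end

section
/- Let p, m ∈ ℕ, let u : Fin p → ℚ be strictly increasing, and let v, w : Fin m → ℚ be strictly increasing with all values of v and w outside the range of u. Assume: (i) ι(v i) = ι(w i) for every i < m; and (ii) for all i, j < m, if ι(v i) = ι(w j) then v i < w j. Then there exists a strictly increasing z : Fin m → ℚ, with all values outside the ranges of u, v, and w, such that ι(z i) = ι(w i) for every i, and for all i, j < m: (v i < z j ↔ v i < w j) and (z i < w j ↔ v i < w j). -/
/- The linear-order copying lemma underlying Step 4 of the proof of Claim A.9: given
strictly increasing tuples v, w over a frame u such that within each interval of u all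
entries of v precede all entries of w, one can interpolate a strictly increasing tuple
z so that (v,z) and (z,w) realize the same order type over u as (v,w). -/

/-- The interval index of `x` relative to the strictly increasing frame `u`: the
number of indices `r` with `u r < x`. -/
def intervalIndex {p : ℕ} (u : Fin p → ℚ) (x : ℚ) : ℕ :=
  (Finset.univ.filter fun r : Fin p => u r < x).card

lemma intervalIndex_mono {p : ℕ} (u : Fin p → ℚ) {x y : ℚ} (h : x ≤ y) :
    intervalIndex u x ≤ intervalIndex u y := by
  apply Finset.card_le_card
  intro r hr
  simp only [Finset.mem_filter, Finset.mem_univ, true_and] at *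
  exact lt_of_lt_of_le hr h

lemma lt_intervalIndex_iff {p : ℕ} {u : Fin p → ℚ} (hu : StrictMono u) {x : ℚ}
    (hx : x ∉ Set.range u) (r : Fin p) :
    u r < x ↔ (r : ℕ) < intervalIndex u x := by
  classical
  set s := Finset.univ.filter fun r : Fin p => u r < x with hs
  have hdc : ∀ a b : Fin p, a ≤ b → b ∈ s → a ∈ s := by
    intro a b hab hb
    simp only [hs, Finset.mem_filter, Finset.mem_univ, true_and] at *
    exact lt_of_le_of_lt (hu.monotone hab) hb
  constructor
  · intro h
    have hsub : Finset.Iic r ⊆ s := by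
      intro a ha
      exact hdc a r (Finset.mem_Iic.mp ha)
        (by simp only [hs, Finset.mem_filter, Finset.mem_univ, true_and]; exact h)
    have := Finset.card_le_card hsub
    rw [Fin.card_Iic] at this
    have hcard : intervalIndex u x = s.card := rfl
    omega
  · intro h
    by_contra hc
    have hsub : s ⊆ Finset.Iio r := by
      intro a ha
      rw [Finset.mem_Iio]
      by_contra hge
      exact hc (by
        have := hdc r a (not_lt.mp hge) ha
        simpa only [hs, Finset.mem_filter, Finset.mem_univ, true_and] using this)
    have := Finset.card_le_card hsub
    rw [Fin.card_Iio] at this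
    have hcard : intervalIndex u x = s.card := rfl
    omega

lemma lt_of_intervalIndex_lt {p : ℕ} {u : Fin p → ℚ} (hu : StrictMono u) {x y : ℚ}
    (hx : x ∉ Set.range u) (hy : y ∉ Set.range u)
    (h : intervalIndex u x < intervalIndex u y) : x < y := by
  have hp : intervalIndex u y ≤ p := by
    have := Finset.card_le_card (Finset.filter_subset
      (fun r : Fin p => u r < y) Finset.univ)
    simpa [intervalIndex] using this
  have hxp : intervalIndex u x < p := lt_of_lt_of_le h hp
  set r : Fin p := ⟨intervalIndex u x, hxp⟩ with hr
  have h1 : ¬ u r < x := by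
    rw [lt_intervalIndex_iff hu hx]
    simp [hr]
  have h2 : u r < y := (lt_intervalIndex_iff hu hy r).mpr (by simpa [hr] using h)
  exact lt_of_le_of_lt (not_lt.mp h1) h2

theorem interpolation_lemma {p m : ℕ} (u : Fin p → ℚ) (v w : Fin m → ℚ)
    (hu : StrictMono u) (hv : StrictMono v) (hw : StrictMono w)
    (hvu : ∀ i, v i ∉ Set.range u) (hwu : ∀ i, w i ∉ Set.range u)
    (hidx : ∀ i, intervalIndex u (v i) = intervalIndex u (w i))
    (hvw : ∀ i j, intervalIndex u (v i) = intervalIndex u (w j) → v i < w j) :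
    ∃ z : Fin m → ℚ, StrictMono z ∧
      (∀ i, z i ∉ Set.range u) ∧
      (∀ i, z i ∉ Set.range v) ∧
      (∀ i, z i ∉ Set.range w) ∧
      (∀ i, intervalIndex u (z i) = intervalIndex u (w i)) ∧
      (∀ i j, (v i < z j ↔ v i < w j)) ∧
      (∀ i j, (z i < w j ↔ v i < w j)) := by
  classical
  have keylt : ∀ k j, v k < w j ↔ intervalIndex u (v k) ≤ intervalIndex u (w j) := by
    intro k j
    constructor
    · exact fun h => intervalIndex_mono u h.le
    · intro h
      rcases eq_or_lt_of_le h with h | h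
      · exact hvw k j h
      · exact lt_of_intervalIndex_lt hu (hvu k) (hwu j) h
  have hvlt : ∀ i, v i < w i := fun i => hvw i i (hidx i)
  -- lower and upper bound finsets
  set lo : Fin m → Finset ℚ := fun i =>
    ((Finset.univ.filter fun k => v k < w i).image v) ∪
    ((Finset.univ.filter fun l => w l ≤ v i).image w) with hlo
  set hi : Fin m → Finset ℚ := fun i =>
    ((Finset.univ.filter fun k => w i ≤ v k).image v) ∪
    ((Finset.univ.filter fun l => v i < w l).image w) with hhi
  have memlo : ∀ i x, x ∈ lo i ↔ (∃ k, v k < w i ∧ v k = x) ∨ (∃ l, w l ≤ v i ∧ w l = x) := by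
    intro i x; simp [hlo]
  have memhi : ∀ i x, x ∈ hi i ↔ (∃ k, w i ≤ v k ∧ v k = x) ∨ (∃ l, v i < w l ∧ w l = x) := by
    intro i x; simp [hhi]
  have lone : ∀ i, (lo i).Nonempty :=
    fun i => ⟨v i, (memlo i (v i)).mpr (Or.inl ⟨i, hvlt i, rfl⟩)⟩
  have hine : ∀ i, (hi i).Nonempty :=
    fun i => ⟨w i, (memhi i (w i)).mpr (Or.inr ⟨i, hvlt i, rfl⟩)⟩
  set A : Fin m → ℚ := fun i => (lo i).max' (lone i) with hA
  set B : Fin m → ℚ := fun i => (hi i).min' (hine i) with hB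
  have hvA : ∀ i, v i ≤ A i :=
    fun i => Finset.le_max' _ _ ((memlo i (v i)).mpr (Or.inl ⟨i, hvlt i, rfl⟩))
  have hBw : ∀ i, B i ≤ w i :=
    fun i => Finset.min'_le _ _ ((memhi i (w i)).mpr (Or.inr ⟨i, hvlt i, rfl⟩))
  -- A i < B i
  have hAB : ∀ i, A i < B i := by
    intro i
    have memA := (memlo i (A i)).mp (Finset.max'_mem (lo i) (lone i))
    have memB := (memhi i (B i)).mp (Finset.min'_mem (hi i) (hine i))
    rcases memA with ⟨k, hk, hkx⟩ | ⟨l, hl, hlx⟩ <;>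
      rcases memB with ⟨k', hk', hkx'⟩ | ⟨j, hj, hjx⟩
    · -- v k < w i ≤ v k'
      rw [← hkx, ← hkx']; linarith
    · -- v k < w i, v i < w j : use index comparisons
      rw [← hkx, ← hjx]
      have h1 : intervalIndex u (v k) ≤ intervalIndex u (w i) := (keylt k i).mp hk
      have h2 : intervalIndex u (v i) ≤ intervalIndex u (w j) := (keylt i j).mp hj
      rw [hidx i] at h2
      exact (keylt k j).mpr (le_trans h1 h2)
    · -- w l ≤ v i < w i ≤ v k'
      rw [← hlx, ← hkx']; linarith [hvlt i]
    · -- w l ≤ v i < w j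
      rw [← hlx, ← hjx]; linarith
  -- monotonicity of the bounds
  have hlosub : ∀ i j : Fin m, i ≤ j → lo i ⊆ lo j := by
    intro i j hij x hx
    rcases (memlo i x).mp hx with ⟨k, hk, hkx⟩ | ⟨l, hl, hlx⟩
    · exact (memlo j x).mpr (Or.inl ⟨k, lt_of_lt_of_le hk (hw.monotone hij), hkx⟩)
    · exact (memlo j x).mpr (Or.inr ⟨l, le_trans hl (hv.monotone hij), hlx⟩)
  have hhisub : ∀ i j : Fin m, i ≤ j → hi j ⊆ hi i := by
    intro i j hij x hx
    rcases (memhi j x).mp hx with ⟨k, hk, hkx⟩ | ⟨l, hl, hlx⟩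
    · exact (memhi i x).mpr (Or.inl ⟨k, le_trans (hw.monotone hij) hk, hkx⟩)
    · exact (memhi i x).mpr (Or.inr ⟨l, lt_of_le_of_lt (hv.monotone hij) hl, hlx⟩)
  have hAmono : ∀ i j : Fin m, i ≤ j → A i ≤ A j :=
    fun i j hij => Finset.le_max' _ _ (hlosub i j hij (Finset.max'_mem _ _))
  have hBmono : ∀ i j : Fin m, i ≤ j → B i ≤ B j :=
    fun i j hij => Finset.min'_le _ _ (hhisub i j hij (Finset.min'_mem _ _))
  -- the interpolating tuple
  set t : Fin m → ℚ := fun i => ((i : ℕ) + 1) / (m + 1) with ht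
  have ht0 : ∀ i, 0 < t i := by intro i; positivity
  have ht1 : ∀ i, t i < 1 := by
    intro i
    rw [ht]
    rw [div_lt_one (by positivity)]
    have := i.2
    push_cast
    exact_mod_cast by exact_mod_cast (by push_cast; exact_mod_cast Nat.add_lt_add_right i.2 1 :
      ((i : ℕ) + 1 : ℚ) < (m : ℚ) + 1)
  have htmono : ∀ i j : Fin m, i < j → t i < t j := by
    intro i j hij
    rw [ht]
    rw [div_lt_div_iff_of_pos_right (by positivity)]
    have : (i : ℕ) < (j : ℕ) := hij
    exact_mod_cast Nat.add_lt_add_right this 1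
  set z : Fin m → ℚ := fun i => A i + (B i - A i) * t i with hz
  have hzA : ∀ i, A i < z i := by
    intro i
    have h1 := hAB i
    have h2 := ht0 i
    show A i < A i + (B i - A i) * t i
    nlinarith
  have hzB : ∀ i, z i < B i := by
    intro i
    have h1 := hAB i
    have h2 := ht1 i
    have h3 := ht0 i
    show A i + (B i - A i) * t i < B i
    nlinarith
  refine ⟨z, ?_, ?_, ?_, ?_, ?_, ?_, ?_⟩
  · -- StrictMono z
    intro i j hij
    have h1 := hAmono i j hij.le
    have h2 := hBmono i j hij.le
    have h3 := hAB i
    have h4 := htmono i j hij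
    have h5 := ht0 i
    have h6 := ht1 j
    show A i + (B i - A i) * t i < A j + (B j - A j) * t j
    nlinarith [mul_nonneg (sub_nonneg.2 h1) (sub_nonneg.2 h6.le),
      mul_nonneg (sub_nonneg.2 h2) (lt_trans h5 h4).le,
      mul_pos (sub_pos.2 h3) (sub_pos.2 h4)]
  · -- z i ∉ range u
    rintro i ⟨r, hr⟩
    have hvz : v i < u r := by
      calc v i ≤ A i := hvA i
        _ < z i := hzA i
        _ = u r := hr.symm
    have hzw : u r < w i := by
      calc u r = z i := hr
        _ < B i := hzB i
        _ ≤ w i := hBw i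
    have h1 : (r : ℕ) < intervalIndex u (w i) := (lt_intervalIndex_iff hu (hwu i) r).mp hzw
    have h2 : u r < v i := (lt_intervalIndex_iff hu (hvu i) r).mpr (by rw [hidx i]; exact h1)
    linarith
  · -- z i ∉ range v
    rintro i ⟨k, hk⟩
    rcases lt_or_ge (v k) (w i) with h | h
    · have : v k ≤ A i := Finset.le_max' _ _ ((memlo i (v k)).mpr (Or.inl ⟨k, h, rfl⟩))
      have := hzA i
      linarith [hk.ge, hk.le]
    · have : B i ≤ v k := Finset.min'_le _ _ ((memhi i (v k)).mpr (Or.inl ⟨k, h, rfl⟩))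
      have := hzB i
      linarith [hk.ge, hk.le]
  · -- z i ∉ range w
    rintro i ⟨l, hl⟩
    rcases le_or_gt (w l) (v i) with h | h
    · have : w l ≤ A i := Finset.le_max' _ _ ((memlo i (w l)).mpr (Or.inr ⟨l, h, rfl⟩))
      have := hzA i
      linarith [hl.ge, hl.le]
    · have : B i ≤ w l := Finset.min'_le _ _ ((memhi i (w l)).mpr (Or.inr ⟨l, h, rfl⟩))
      have := hzB i
      linarith [hl.ge, hl.le]
  · -- intervalIndex u (z i) = intervalIndex u (w i)
    intro i
    unfold intervalIndex
    congr 1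
    ext r
    simp only [Finset.mem_filter, Finset.mem_univ, true_and]
    constructor
    · intro h
      calc u r < z i := h
        _ < B i := hzB i
        _ ≤ w i := hBw i
    · intro h
      have h1 : (r : ℕ) < intervalIndex u (w i) := (lt_intervalIndex_iff hu (hwu i) r).mp h
      have h2 : u r < v i := (lt_intervalIndex_iff hu (hvu i) r).mpr (by rw [hidx i]; exact h1)
      calc u r < v i := h2
        _ ≤ A i := hvA i
        _ < z i := hzA i
  · -- v i < z j ↔ v i < w j
    intro i j
    constructor
    · intro h
      by_contra hc
      push_neg at hc
      have : B j ≤ v i := Finset.min'_le _ _ ((memhi j (v i)).mpr (Or.inl ⟨i, hc, rfl⟩))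
      have := hzB j
      linarith
    · intro h
      have : v i ≤ A j := Finset.le_max' _ _ ((memlo j (v i)).mpr (Or.inl ⟨i, h, rfl⟩))
      have := hzA j
      linarith
  · -- z i < w j ↔ v i < w j
    intro i j
    constructor
    · intro h
      by_contra hc
      push_neg at hc
      have : w j ≤ A i := Finset.le_max' _ _ ((memlo i (w j)).mpr (Or.inr ⟨j, hc, rfl⟩))
      have := hzA i
      linarith
    · intro h
      have : B i ≤ w j := Finset.min'_le _ _ ((memhi i (w j)).mpr (Or.inr ⟨j, h, rfl⟩))
      have := hzB i
      linarith
end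

section
/- Let Y = {(s,t) ∈ ℚ × ℚ : s < t}. Define relations on Y by: E₁((s,t),(s′,t′)) ↔ s = s′; E₂((s,t),(s′,t′)) ↔ t = t′; and F((s,t),(s′,t′)) ↔ s = t′. Then: E₁ and E₂ are equivalence relations on Y; F is invariant under E₁ in its first argument and under E₂ in its second argument, and induces a well-defined bijection from the quotient Y/E₁ onto the quotient Y/E₂; and F has no fixed point, i.e., there is no (s,t) ∈ Y with F((s,t),(s,t)). -/
/- The verification from the appendix that the context of infinite linear orders has
property ⊛ (Definition A.1): on Y = {(s,t) ∈ ℚ × ℚ : s < t}, the relations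
E₁ = equal first coordinate, E₂ = equal second coordinate are equivalence relations,
and F((s,t),(s′,t′)) ↔ s = t′ induces a fixed-point-free bijection Y/E₁ → Y/E₂. -/

/-- Pairs of rationals in strictly increasing order. -/
def RatPairs : Type := {q : ℚ × ℚ // q.1 < q.2}

/-- `E₁`: equality of first coordinates. -/
def E1 (a b : RatPairs) : Prop := a.1.1 = b.1.1

/-- `E₂`: equality of second coordinates. -/
def E2 (a b : RatPairs) : Prop := a.1.2 = b.1.2

/-- `F`: the first coordinate of the first pair equals the second coordinate of the
second pair. -/
def Frel (a b : RatPairs) : Prop := a.1.1 = b.1.2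

/-- The setoid given by `E₁`. -/
def setoidE1 : Setoid RatPairs :=
  ⟨E1, ⟨fun _ => rfl, fun h => h.symm, fun h h' => h.trans h'⟩⟩

/-- The setoid given by `E₂`. -/
def setoidE2 : Setoid RatPairs :=
  ⟨E2, ⟨fun _ => rfl, fun h => h.symm, fun h h' => h.trans h'⟩⟩

theorem linear_order_context_has_circle_property :
    -- E₁ and E₂ are equivalence relations on Y
    Equivalence E1 ∧ Equivalence E2 ∧
    -- F is invariant under E₁ in its first argument, under E₂ in its second
    (∀ a a' b b' : RatPairs, E1 a a' → E2 b b' → (Frel a b ↔ Frel a' b')) ∧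
    -- F induces a well-defined bijection from Y/E₁ onto Y/E₂
    (∃ g : Quotient setoidE1 → Quotient setoidE2, Function.Bijective g ∧
      ∀ a b : RatPairs,
        (g (Quotient.mk setoidE1 a) = Quotient.mk setoidE2 b ↔ Frel a b)) ∧
    -- F has no fixed point
    (∀ a : RatPairs, ¬ Frel a a) := by
  refine ⟨setoidE1.iseqv, setoidE2.iseqv, ?_, ?_, ?_⟩
  · intro a a' b b' h1 h2
    unfold E1 at h1; unfold E2 at h2; unfold Frel
    rw [h1, h2]
  · refine ⟨Quotient.lift
      (fun a => Quotient.mk setoidE2 (⟨(a.1.1 - 1, a.1.1), by simp⟩ : RatPairs))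
      (fun a b h => Quotient.sound (show E2 _ _ from h)), ⟨?_, ?_⟩, ?_⟩
    · intro x y
      induction x using Quotient.ind
      induction y using Quotient.ind
      rename_i a b
      intro h
      have h2 : E2 (⟨(a.1.1 - 1, a.1.1), by simp⟩ : RatPairs) ⟨(b.1.1 - 1, b.1.1), by simp⟩ :=
        Quotient.exact h
      exact Quotient.sound (show E1 a b from h2)
    · intro y
      induction y using Quotient.ind
      rename_i b
      refine ⟨Quotient.mk setoidE1 ⟨(b.1.2, b.1.2 + 1), by simp⟩, ?_⟩
      exact Quotient.sound (show E2 _ _ from rfl)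
    · intro a b
      constructor
      · intro h
        exact Quotient.exact h
      · intro h
        exact Quotient.sound (show E2 _ _ from h)
  · intro a h
    have := a.2
    unfold Frel at h
    linarith
end

section
/- Let Y be a set, let E₁ and E₂ be equivalence relations on Y, and let F ⊆ (Y/E₁) × (Y/E₂) be a partial injective function (a functional and injective relation between the quotients). Then there exist a type Z and functions σ₁, σ₂ : Y → Z such that: for each i ∈ {1,2} and all y, y′ ∈ Y, σ_i(y) = σ_i(y′) if and only if y E_i y′; and for all y, y′ ∈ Y, σ₁(y) = σ₂(y′) if and only if F relates [y]_{E₁} to [y′]_{E₂}. -/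
/- The realization lemma from Discussion A.2 / Claim A.4: two functions σ₁, σ₂ can be
interpreted so that their ranges realize prescribed equality patterns encoded by two
equivalence relations and a partial injective matching F between the quotients. -/

universe u

theorem realize_equality_pattern {Y : Type u} (r₁ r₂ : Y → Y → Prop)
    (h₁ : Equivalence r₁) (h₂ : Equivalence r₂)
    (F : Quotient (Setoid.mk r₁ h₁) → Quotient (Setoid.mk r₂ h₂) → Prop)
    (hfun : ∀ a b b', F a b → F a b' → b = b')
    (hinj : ∀ a a' b, F a b → F a' b → a = a') :
    ∃ (Z : Type u) (σ₁ σ₂ : Y → Z),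
      (∀ y y', σ₁ y = σ₁ y' ↔ r₁ y y') ∧
      (∀ y y', σ₂ y = σ₂ y' ↔ r₂ y y') ∧
      (∀ y y', σ₁ y = σ₂ y' ↔
        F (Quotient.mk (Setoid.mk r₁ h₁) y) (Quotient.mk (Setoid.mk r₂ h₂) y')) := by
  classical
  let s₁ := Setoid.mk r₁ h₁
  let s₂ := Setoid.mk r₂ h₂
  refine ⟨Quotient s₁ ⊕ Quotient s₂,
    fun y => Sum.inl (Quotient.mk s₁ y),
    fun y => if h : ∃ a, F a (Quotient.mk s₂ y) then Sum.inl h.choose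
      else Sum.inr (Quotient.mk s₂ y), ?_, ?_, ?_⟩
  · intro y y'
    simp only [Sum.inl.injEq, Quotient.eq]
    rfl
  · intro y y'
    by_cases h : ∃ a, F a (Quotient.mk s₂ y) <;>
      by_cases h' : ∃ a, F a (Quotient.mk s₂ y') <;>
      simp only [h, h', dif_pos, dif_neg, not_false_iff]
    · constructor
      · intro he
        have := h.choose_spec
        have := h'.choose_spec
        have hb : Quotient.mk s₂ y = Quotient.mk s₂ y' := by
          have he' : h.choose = h'.choose := Sum.inl.inj he
          exact hfun _ _ _ h.choose_spec (he' ▸ h'.choose_spec)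
        exact Quotient.exact hb
      · intro hr
        have hb : Quotient.mk s₂ y = Quotient.mk s₂ y' := Quotient.sound hr
        simp only [Sum.inl.injEq]
        have h'spec : F h'.choose (Quotient.mk s₂ y) := by
          rw [hb]; exact h'.choose_spec
        exact hinj _ _ _ h.choose_spec h'spec
    · constructor
      · intro he; exact absurd he (by simp)
      · intro hr
        exact absurd ((Quotient.sound (s := s₂) hr) ▸ h) h'
    · constructor
      · intro he; exact absurd he (by simp)
      · intro hr
        exact absurd ((Quotient.sound (s := s₂) hr) ▸ h') h
    · constructor
      · intro he
        exact Quotient.exact (Sum.inr.inj he)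
      · intro hr
        exact congrArg Sum.inr (Quotient.sound hr)
  · intro y y'
    by_cases h : ∃ a, F a (Quotient.mk s₂ y')
    · simp only [h, dif_pos, Sum.inl.injEq]
      constructor
      · intro he; exact he ▸ h.choose_spec
      · intro hf; exact hinj _ _ _ hf h.choose_spec
    · simp only [h, dif_neg, not_false_iff]
      constructor
      · intro he; exact absurd he (by simp)
      · intro hf; exact absurd ⟨_, hf⟩ h
end

section
/- Let Y be a set, E₁ and E₂ equivalence relations on Y, and F : Y/E₁ → Y/E₂ a bijection with no fixed point, meaning that F([y]_{E₁}) ≠ [y]_{E₂} for every y ∈ Y. Let Z and σ₁, σ₂ : Y → Z satisfy: σ_i(y) = σ_i(y′) ↔ y E_i y′ for i ∈ {1,2}, and σ₁(y) = σ₂(y′) ↔ F([y]_{E₁}) = [y′]_{E₂}. Then: (a) σ₁(y) ≠ σ₂(y) for every y ∈ Y; (b) for every y ∈ Y there exists y′ ∈ Y with σ₁(y) = σ₂(y′); consequently, for any simple graph G on a vertex type containing Z, for every y ∈ Y there is y′ ∈ Y such that no vertex x satisfies all of: x adjacent to σ₁(y), x not adjacent to σ₂(y), x adjacent to σ₁(y′),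 and x not adjacent to σ₂(y′). -/
/- The combinatorial core of Claim A.4: from a fixed-point-free bijective matching F
between the quotients Y/E₁ and Y/E₂, realized by functions σ₁, σ₂, each condition
R(x, σ₁(y)) ∧ ¬R(x, σ₂(y)) is nondegenerate, yet the family of these conditions is
2-inconsistent in any simple graph. -/

universe u v w

theorem fixed_point_free_matching_two_inconsistent {Y : Type u} {Z : Type v}
    (r₁ r₂ : Y → Y → Prop) (h₁ : Equivalence r₁) (h₂ : Equivalence r₂)
    (F : Quotient (Setoid.mk r₁ h₁) → Quotient (Setoid.mk r₂ h₂))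
    (hFbij : Function.Bijective F)
    (hFnofix : ∀ y : Y,
      F (Quotient.mk (Setoid.mk r₁ h₁) y) ≠ Quotient.mk (Setoid.mk r₂ h₂) y)
    (σ₁ σ₂ : Y → Z)
    (hσ₁ : ∀ y y', σ₁ y = σ₁ y' ↔ r₁ y y')
    (hσ₂ : ∀ y y', σ₂ y = σ₂ y' ↔ r₂ y y')
    (hσF : ∀ y y', σ₁ y = σ₂ y' ↔
      F (Quotient.mk (Setoid.mk r₁ h₁) y) = Quotient.mk (Setoid.mk r₂ h₂) y') :
    -- (a) the two parameters are always distinct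
    (∀ y : Y, σ₁ y ≠ σ₂ y) ∧
    -- (b) every σ₁-value is also a σ₂-value
    (∀ y : Y, ∃ y' : Y, σ₁ y = σ₂ y') ∧
    -- (c) 2-inconsistency in any simple graph on a vertex type containing Z
    (∀ (W : Type w) (G : SimpleGraph W) (e : Z ↪ W),
      ∀ y : Y, ∃ y' : Y,
        ¬ ∃ x : W, G.Adj x (e (σ₁ y)) ∧ ¬ G.Adj x (e (σ₂ y)) ∧
          G.Adj x (e (σ₁ y')) ∧ ¬ G.Adj x (e (σ₂ y'))) := by
  have hb : ∀ y : Y, ∃ y' : Y, σ₁ y = σ₂ y' := by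
    intro y
    obtain ⟨y', hy'⟩ := Quotient.exists_rep (F (Quotient.mk (Setoid.mk r₁ h₁) y))
    exact ⟨y', (hσF y y').2 hy'.symm⟩
  refine ⟨fun y h => hFnofix y ((hσF y y).1 h), hb, ?_⟩
  intro W G e y
  obtain ⟨y', hy'⟩ := hb y
  refine ⟨y', ?_⟩
  rintro ⟨x, _, h2, _, h4⟩
  rw [hy'] at *
  exact h4 (by assumption)
end
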